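/- Let A be a commutative ring, J an ideal, and t = 1 + s with s ∈ J. If t is a nonzerodivisor in A, then the quotient module J/tJ is isomorphic as an A-module to A/tA. -/

import Mathlib

/-- if `s ∈ J` and `t = 1 + s` is a nonzerodivisor, then
`J/tJ ≅ A/tA` as `A`-modules. -/
theorem stmt3 {A : Type*} [CommRing A] (J : Ideal A) (s : A) (hs : s ∈ J)
    (t : A) (ht : t = 1 + s) (hreg : t ∈ nonZeroDivisors A) :
    Nonempty ((↥J ⧸ (Submodule.comap J.subtype (Ideal.span {t} * J) : Submodule A ↥J))
      ≃ₗ[A] (A ⧸ Ideal.span {t})) := by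
  classical
  let f : J →ₗ[A] A ⧸ Ideal.span {t} := (Ideal.span {t}).mkQ.comp J.subtype
  have hker : LinearMap.ker f
      = (Submodule.comap J.subtype (Ideal.span {t} * J) : Submodule A ↥J) := by
    ext x
    simp only [f, LinearMap.mem_ker, LinearMap.comp_apply, Submodule.mkQ_apply,
      Submodule.Quotient.mk_eq_zero, Submodule.mem_comap, Submodule.coe_subtype]
    constructor
    · intro hx
      rcases Ideal.mem_span_singleton'.mp hx with ⟨c, hc⟩
      have hcJ : c ∈ J := by
        have hceq : c = (x : A) - s * c := by
          rw [← hc, ht]; ring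
        rw [hceq]
        exact J.sub_mem x.2 (J.mul_mem_right c hs)
      have hxeq : (x : A) = t * c := by rw [← hc]; ring
      rw [hxeq]
      exact Ideal.mul_mem_mul (Ideal.mem_span_singleton_self t) hcJ
    · intro hx
      exact Ideal.mul_le_left (I := Ideal.span {t}) (J := J) hx
  have hsurj : Function.Surjective f := by
    intro a
    obtain ⟨a, rfl⟩ := Submodule.mkQ_surjective _ a
    refine ⟨⟨-(a * s), J.neg_mem (J.mul_mem_left a hs)⟩, ?_⟩
    simp only [f, LinearMap.comp_apply, Submodule.coe_subtype, Submodule.mkQ_apply]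
    rw [Submodule.Quotient.eq]
    refine Ideal.mem_span_singleton'.mpr ⟨-a, ?_⟩
    rw [ht]; ring
  exact ⟨(Submodule.quotEquivOfEq (Submodule.comap J.subtype (Ideal.span {t} * J) : Submodule A ↥J) (LinearMap.ker f) hker.symm).trans
    (f.quotKerEquivOfSurjective hsurj)⟩
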